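/- Let γ > 0 and let a < b be real numbers. Then for every ω ∈ [a, b], ∫_a^b (1 + √5·|ω − ω'|/γ + 5·(ω − ω')²/(3γ²)) · exp(−√5·|ω − ω'|/γ) · (b − a)^{-1} dω' = (b − a)^{-1} · (16√5·γ − exp(√5(a − ω)/γ)·(√5·(8γ² + 5(a − ω)²)/γ + 25(ω − a)) + exp(√5(ω − b)/γ)·(−√5·(8γ² + 5(b − ω)²)/γ + 25(ω − b))) / 15. -/

import Mathlib

open Real

lemma matern_antideriv (c : ℝ) (hc : 0 < c) (u : ℝ) :
    HasDerivAt (fun u : ℝ => -(8/(3*c) + 5/3*u + c/3*u^2) * Real.exp (-(c*u)))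
      ((1 + c*u + c^2*u^2/3) * Real.exp (-(c*u))) u := by
  have h1 : HasDerivAt (fun u : ℝ => -(8/(3*c) + 5/3*u + c/3*u^2))
      (-(5/3 + c/3*(2*u))) u := by
    have hp : HasDerivAt (fun u : ℝ => 8/(3*c) + 5/3*u + c/3*u^2)
        (5/3 + c/3*(2*u)) u := by
      have h2' : HasDerivAt (fun u : ℝ => u^2) (2*u) u := by
        simpa using hasDerivAt_pow 2 u
      have := ((hasDerivAt_id u).const_mul (5/3)).add (h2'.const_mul (c/3))
      simpa [mul_comm, mul_assoc, add_assoc] using this.const_add (8/(3*c))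
    exact hp.neg
  have h2 : HasDerivAt (fun u : ℝ => Real.exp (-(c*u))) (-c * Real.exp (-(c*u))) u := by
    have hin : HasDerivAt (fun u : ℝ => -(c*u)) (-c) u := by
      exact (((hasDerivAt_id u).const_mul c).neg).congr_deriv (by simp)
    refine ((Real.hasDerivAt_exp (-(c*u))).comp u hin).congr_deriv ?_
    ring
  have := h1.mul h2
  refine this.congr_deriv ?_
  field_simp
  ring

theorem matern_five_half_kernel_mean
    (γ a b : ℝ) (hγ : 0 < γ) (hab : a < b) :
    ∀ ω ∈ Set.Icc a b,
      (∫ ω' in a..b,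
        (1 + Real.sqrt 5 * |ω - ω'| / γ + 5 * (ω - ω') ^ 2 / (3 * γ ^ 2)) *
          Real.exp (-(Real.sqrt 5) * |ω - ω'| / γ) * (b - a)⁻¹)
      = (b - a)⁻¹ *
          (16 * Real.sqrt 5 * γ -
            Real.exp (Real.sqrt 5 * (a - ω) / γ) *
              (Real.sqrt 5 * (8 * γ ^ 2 + 5 * (a - ω) ^ 2) / γ + 25 * (ω - a)) +
            Real.exp (Real.sqrt 5 * (ω - b) / γ) *
              (-(Real.sqrt 5) * (8 * γ ^ 2 + 5 * (b - ω) ^ 2) / γ + 25 * (ω - b)))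
          / 15 := by
  intro ω hω
  obtain ⟨haω, hωb⟩ := hω
  set s := Real.sqrt 5 with hs_def
  have hs : 0 < s := Real.sqrt_pos.mpr (by norm_num)
  have hs2 : s ^ 2 = 5 := Real.sq_sqrt (by norm_num)
  set c := s / γ with hc_def
  have hc : 0 < c := div_pos hs hγ
  -- the integrand
  set f : ℝ → ℝ := fun ω' =>
    (1 + s * |ω - ω'| / γ + 5 * (ω - ω') ^ 2 / (3 * γ ^ 2)) *
      Real.exp (-s * |ω - ω'| / γ) * (b - a)⁻¹ with hf_def
  have hfc : Continuous f := by fun_prop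
  -- split the integral at ω
  have hsplit : (∫ ω' in a..b, f ω') = (∫ ω' in a..ω, f ω') + (∫ ω' in ω..b, f ω') :=
    (intervalIntegral.integral_add_adjacent_intervals
      (hfc.intervalIntegrable a ω) (hfc.intervalIntegrable ω b)).symm
  -- left integral
  have hL : (∫ ω' in a..ω, f ω') =
      (8/(3*c) - (8/(3*c) + 5/3*(ω-a) + c/3*(ω-a)^2) * Real.exp (-(c*(ω-a)))) * (b-a)⁻¹ := by
    have heq : Set.EqOn f
        (fun x => (1 + c*(ω-x) + c^2*(ω-x)^2/3) * Real.exp (-(c*(ω-x))) * (b-a)⁻¹)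
        (Set.uIcc a ω) := by
      intro x hx
      rw [Set.uIcc_of_le haω] at hx
      have habs : |ω - x| = ω - x := abs_of_nonneg (by linarith [hx.2])
      have harg : -s * |ω - x| / γ = -(c*(ω-x)) := by rw [habs, hc_def]; ring
      have hcoef : 1 + s * |ω - x| / γ + 5 * (ω - x) ^ 2 / (3 * γ ^ 2)
          = 1 + c*(ω-x) + c^2*(ω-x)^2/3 := by
        rw [habs, hc_def]
        field_simp
        linear_combination (-1) * (ω-x)^2 * hs2
      simp only [hf_def, harg, hcoef]
    rw [intervalIntegral.integral_congr heq]
    rw [intervalIntegral.integral_mul_const]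
    congr 1
    have hder : ∀ x ∈ Set.uIcc a ω,
        HasDerivAt (fun x => -(-(8/(3*c) + 5/3*(ω-x) + c/3*(ω-x)^2) * Real.exp (-(c*(ω-x)))))
          ((1 + c*(ω-x) + c^2*(ω-x)^2/3) * Real.exp (-(c*(ω-x)))) x := by
      intro x _
      have hcomp := ((matern_antideriv c hc (ω-x)).comp x ((hasDerivAt_id x).const_sub ω)).neg
      exact hcomp.congr_deriv (by ring)
    have hint : IntervalIntegrable
        (fun x => (1 + c*(ω-x) + c^2*(ω-x)^2/3) * Real.exp (-(c*(ω-x)))) MeasureTheory.volume a ω :=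
      (by fun_prop : Continuous _).intervalIntegrable a ω
    rw [intervalIntegral.integral_eq_sub_of_hasDerivAt hder hint]
    simp
    try ring
  -- right integral
  have hR : (∫ ω' in ω..b, f ω') =
      (8/(3*c) - (8/(3*c) + 5/3*(b-ω) + c/3*(b-ω)^2) * Real.exp (-(c*(b-ω)))) * (b-a)⁻¹ := by
    have heq : Set.EqOn f
        (fun x => (1 + c*(x-ω) + c^2*(x-ω)^2/3) * Real.exp (-(c*(x-ω))) * (b-a)⁻¹)
        (Set.uIcc ω b) := by
      intro x hx
      rw [Set.uIcc_of_le hωb] at hx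
      have habs : |ω - x| = x - ω := by
        rw [abs_sub_comm]; exact abs_of_nonneg (by linarith [hx.1])
      have harg : -s * |ω - x| / γ = -(c*(x-ω)) := by rw [habs, hc_def]; ring
      have hcoef : 1 + s * |ω - x| / γ + 5 * (ω - x) ^ 2 / (3 * γ ^ 2)
          = 1 + c*(x-ω) + c^2*(x-ω)^2/3 := by
        rw [habs, hc_def]
        field_simp
        linear_combination (-1) * (ω-x)^2 * hs2
      simp only [hf_def, harg, hcoef]
    rw [intervalIntegral.integral_congr heq]
    rw [intervalIntegral.integral_mul_const]
    congr 1
    have hder : ∀ x ∈ Set.uIcc ω b,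
        HasDerivAt (fun x => -(8/(3*c) + 5/3*(x-ω) + c/3*(x-ω)^2) * Real.exp (-(c*(x-ω))))
          ((1 + c*(x-ω) + c^2*(x-ω)^2/3) * Real.exp (-(c*(x-ω)))) x := by
      intro x _
      have hcomp := (matern_antideriv c hc (x-ω)).comp x ((hasDerivAt_id x).sub_const ω)
      exact hcomp.congr_deriv (by ring)
    have hint : IntervalIntegrable
        (fun x => (1 + c*(x-ω) + c^2*(x-ω)^2/3) * Real.exp (-(c*(x-ω)))) MeasureTheory.volume ω b :=
      (by fun_prop : Continuous _).intervalIntegrable ω b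
    rw [intervalIntegral.integral_eq_sub_of_hasDerivAt hder hint]
    simp
    try ring
  rw [hsplit, hL, hR]
  -- rewrite exponential arguments
  have e1 : s * (a - ω) / γ = -(c*(ω-a)) := by rw [hc_def]; ring
  have e2 : s * (ω - b) / γ = -(c*(b-ω)) := by rw [hc_def]; ring
  rw [e1, e2]
  have hA : 8/(3*c) + 8/(3*c) = 16*s*γ/15 := by
    rw [hc_def]; field_simp; linear_combination (-48)*hs2
  have hB : 8/(3*c) + 5/3*(ω-a) + c/3*(ω-a)^2
      = (s*(8*γ^2+5*(a-ω)^2)/γ + 25*(ω-a))/15 := by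
    rw [hc_def]; field_simp; linear_combination (-24)*γ^2*hs2
  have hC : 8/(3*c) + 5/3*(b-ω) + c/3*(b-ω)^2
      = (s*(8*γ^2+5*(b-ω)^2)/γ + 25*(b-ω))/15 := by
    rw [hc_def]; field_simp; linear_combination (-24)*γ^2*hs2
  linear_combination (b-a)⁻¹ * hA - (b-a)⁻¹ * Real.exp (-(c*(ω-a))) * hB
    - (b-a)⁻¹ * Real.exp (-(c*(b-ω))) * hC
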